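/- Let M be a finitely generated abelian group, Ξ ⊆ M_ℚ a finite set, N = M_ℚ^∨ with a rational inner product, and suppose x corresponds to the state Ξ as in the convex-geometric algorithm: set Ξ₀ = Ξ, N₀ = N, let F₀ be the smallest face of cone(Ξ₀) containing 0 (i.e., the maximal linear subspace contained in cone(Ξ₀) intersected with the cone), N₁ = F₀^⊥ ⊆ N₀, and λ₀ ∈ N₁ the unique minimizer of the norm subject to (λ₀, α) ≥ 1 for all α ∈ Ξ₀ \ F₀. Then with Ξ₁ = {p₁(α) : α ∈ Ξ₀, (λ₀, α) = 1} ⊆ N₁ (p₁ the orthogonal projection N₀ → N₁), one has λ₀ ∈ cone(Ξ₁). -/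

import Mathlib

/-- The cone generated by a subset `S` of a `ℚ`-vector space. -/
def qCone {V : Type*} [AddCommGroup V] [Module ℚ V] (S : Set V) : Set V :=
  {x | ∃ (t : Finset V) (c : V → ℚ), (↑t : Set V) ⊆ S ∧ (∀ v, 0 ≤ c v) ∧
    x = ∑ v ∈ t, c v • v}


section

variable {V : Type*} [AddCommGroup V] [Module ℚ V]

lemma qCone_mono {S T : Set V} (h : S ⊆ T) : qCone S ⊆ qCone T := by
  rintro x ⟨t, c, hts, hc, rfl⟩
  exact ⟨t, c, hts.trans h, hc, rfl⟩

lemma zero_mem_qCone (S : Set V) : (0 : V) ∈ qCone S :=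
  ⟨∅, fun _ => 0, by simp, fun _ => le_refl _, by simp⟩

lemma mem_qCone_iff (S : Finset V) (x : V) :
    x ∈ qCone (↑S : Set V) ↔ ∃ c : V → ℚ, (∀ v, 0 ≤ c v) ∧ x = ∑ v ∈ S, c v • v := by
  classical
  constructor
  · rintro ⟨t, c, hts, hc, rfl⟩
    refine ⟨fun v => if v ∈ t then c v else 0, ?_, ?_⟩
    · intro v; by_cases h : v ∈ t <;> simp [h, hc v]
    · rw [← Finset.sum_subset (Finset.coe_subset.mp hts)
        (fun x _ hx => by simp [hx])]
      exact Finset.sum_congr rfl (fun v hv => by simp [hv])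
  · rintro ⟨c, hc, rfl⟩
    exact ⟨S, c, subset_rfl, hc, rfl⟩

lemma add_mem_qCone (S : Finset V) {x y : V}
    (hx : x ∈ qCone (↑S : Set V)) (hy : y ∈ qCone (↑S : Set V)) :
    x + y ∈ qCone (↑S : Set V) := by
  rw [mem_qCone_iff] at *
  obtain ⟨c, hc, rfl⟩ := hx
  obtain ⟨d, hd, rfl⟩ := hy
  exact ⟨c + d, fun v => add_nonneg (hc v) (hd v), by simp [add_smul, Finset.sum_add_distrib]⟩

lemma smul_mem_qCone (S : Finset V) {r : ℚ} (hr : 0 ≤ r) {x : V}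
    (hx : x ∈ qCone (↑S : Set V)) : r • x ∈ qCone (↑S : Set V) := by
  rw [mem_qCone_iff] at *
  obtain ⟨c, hc, rfl⟩ := hx
  exact ⟨fun v => r * c v, fun v => mul_nonneg hr (hc v),
    by rw [Finset.smul_sum]; exact Finset.sum_congr rfl (fun v _ => by rw [smul_smul])⟩

lemma mem_qCone_of_mem (S : Finset V) {x : V} (hx : x ∈ S) :
    x ∈ qCone (↑S : Set V) := by
  classical
  rw [mem_qCone_iff]
  refine ⟨fun v => if v = x then 1 else 0, fun v => by positivity, ?_⟩
  rw [Finset.sum_eq_single x (fun v _ hv => by simp [hv]) (fun h => absurd hx h)]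
  simp

lemma sum_mem_qCone {ι : Type*} (S : Finset V) (t : Finset ι) (f : ι → V)
    (h : ∀ i ∈ t, f i ∈ qCone (↑S : Set V)) :
    (∑ i ∈ t, f i) ∈ qCone (↑S : Set V) := by
  classical
  induction t using Finset.induction with
  | empty => simpa using zero_mem_qCone _
  | insert _ _ hi ih =>
    rw [Finset.sum_insert hi]
    exact add_mem_qCone S (h _ (Finset.mem_insert_self _ _))
      (ih fun i hit => h i (Finset.mem_insert_of_mem hit))

/-- Farkas lemma over ℚ for finitely generated cones. -/
lemma qFarkas (B : V →ₗ[ℚ] V →ₗ[ℚ] ℚ) (hpos : ∀ x, x ≠ 0 → 0 < B x x) :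
    ∀ (n : ℕ) (S : Finset V) (l : V), S.card ≤ n → l ∉ qCone (↑S : Set V) →
      ∃ w : V, (∀ s ∈ S, B w s ≤ 0) ∧ 0 < B w l := by
  classical
  intro n
  induction n with
  | zero =>
    intro S l hcard hl
    have hS : S = ∅ := Finset.card_eq_zero.mp (Nat.le_zero.mp hcard)
    subst hS
    have hl0 : l ≠ 0 := fun h => hl (h ▸ zero_mem_qCone _)
    exact ⟨l, by simp, hpos l hl0⟩
  | succ n ih =>
    intro S l hcard hl
    by_cases hSe : S = ∅
    · subst hSe
      have hl0 : l ≠ 0 := fun h => hl (h ▸ zero_mem_qCone _)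
      exact ⟨l, by simp, hpos l hl0⟩
    obtain ⟨a, ha⟩ := Finset.nonempty_iff_ne_empty.mpr hSe
    set S' := S.erase a with hS'
    have hcard' : S'.card ≤ n := by
      have h2 : 1 ≤ S.card := Finset.card_pos.mpr ⟨a, ha⟩
      rw [hS', Finset.card_erase_of_mem ha]
      omega
    have hsub' : (↑S' : Set V) ⊆ (↑S : Set V) := Finset.coe_subset.mpr (Finset.erase_subset a S)
    have hl' : l ∉ qCone (↑S' : Set V) := fun h => hl (qCone_mono hsub' h)
    obtain ⟨w, hwS', hwl⟩ := ih S' l hcard' hl'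
    by_cases hwa : B w a ≤ 0
    · refine ⟨w, fun s hs => ?_, hwl⟩
      by_cases h : s = a
      · exact h ▸ hwa
      · exact hwS' s (Finset.mem_erase.mpr ⟨h, hs⟩)
    push_neg at hwa
    have hwane : B w a ≠ 0 := ne_of_gt hwa
    set g : V → V := fun s => s - (B w s / B w a) • a with hg
    set S'' := S'.image g with hS''
    set l₂ := l - (B w l / B w a) • a with hl₂
    have hcard'' : S''.card ≤ n := le_trans (Finset.card_image_le) hcard'
    by_cases hmem : l₂ ∈ qCone (↑S'' : Set V)
    · -- then l ∈ qCone S, contradiction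
      exfalso
      apply hl
      rw [mem_qCone_iff] at hmem
      obtain ⟨c, hc, hrep⟩ := hmem
      have h1 : l = (∑ v ∈ S'', c v • v) + (B w l / B w a) • a := by
        rw [← hrep, hl₂]; abel
      rw [h1]
      refine add_mem_qCone S ?_ (smul_mem_qCone S (by positivity) (mem_qCone_of_mem S ha))
      refine sum_mem_qCone S S'' _ (fun v hv => ?_)
      obtain ⟨s, hs, rfl⟩ := Finset.mem_image.mp hv
      have hks : B w s / B w a ≤ 0 := div_nonpos_of_nonpos_of_nonneg (hwS' s hs) (le_of_lt hwa)
      have h2 : c (g s) • g s = c (g s) • s + (c (g s) * (-(B w s / B w a))) • a := by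
        rw [hg]; simp only [smul_sub, smul_smul]
        module
      rw [h2]
      refine add_mem_qCone S
        (smul_mem_qCone S (hc _) (mem_qCone_of_mem S (Finset.mem_of_mem_erase hs)))
        (smul_mem_qCone S (mul_nonneg (hc _) (neg_nonneg.mpr hks)) (mem_qCone_of_mem S ha))
    · obtain ⟨u, huS'', hul₂⟩ := ih S'' l₂ hcard'' hmem
      refine ⟨u - (B u a / B w a) • w, fun s hs => ?_, ?_⟩
      · by_cases h : s = a
        swap
        · have h : s ∈ S' := Finset.mem_erase.mpr ⟨h, hs⟩
          have hgu : B u (g s) ≤ 0 := huS'' (g s) (Finset.mem_image_of_mem g h)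
          have : B (u - (B u a / B w a) • w) s = B u (g s) := by
            rw [hg]; simp only [map_sub, map_smul, LinearMap.sub_apply, LinearMap.smul_apply,
              smul_eq_mul]
            field_simp
          rw [this]; exact hgu
        · rw [h]
          have heq : B (u - (B u a / B w a) • w) a = 0 := by
            simp only [map_sub, map_smul, LinearMap.sub_apply, LinearMap.smul_apply, smul_eq_mul]
            field_simp
            ring
          rw [heq]
      · have : B (u - (B u a / B w a) • w) l = B u l₂ := by
          rw [hl₂]; simp only [map_sub, map_smul, LinearMap.sub_apply, LinearMap.smul_apply,
            smul_eq_mul]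
          field_simp
        rw [this]; exact hul₂

end

/-- First step of the convex-geometric algorithm (Section 1.4 / Theorem 5.1.19):
let `F₀` be the smallest face of `cone Ξ₀` containing `0` (its lineality part),
`N₁ = F₀^⊥`, and `λ₀ ∈ N₁` the norm-minimizer subject to `(λ₀, a) ≥ 1` for all
`a ∈ Ξ₀ \ F₀`. With `p` the orthogonal projection onto `N₁` and
`Ξ₁ = p({a ∈ Ξ₀ : (λ₀, a) = 1})`, one has `λ₀ ∈ cone Ξ₁`. -/
theorem stmt15 {V : Type*} [AddCommGroup V] [Module ℚ V] [FiniteDimensional ℚ V]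
    (B : V →ₗ[ℚ] V →ₗ[ℚ] ℚ) (hsymm : ∀ x y, B x y = B y x)
    (hpos : ∀ x, x ≠ 0 → 0 < B x x)
    (Ξ : Finset V)
    (F₀ : Set V)
    (hF₀ : F₀ = {x | x ∈ qCone (↑Ξ : Set V) ∧ -x ∈ qCone (↑Ξ : Set V)})
    (N₁ : Set V) (hN₁ : N₁ = {v | ∀ w ∈ F₀, B v w = 0})
    (l : V) (hlN : l ∈ N₁)
    (hfeas : ∀ a ∈ Ξ, a ∉ F₀ → 1 ≤ B l a)
    (hmin : ∀ μ ∈ N₁, (∀ a ∈ Ξ, a ∉ F₀ → 1 ≤ B μ a) → B l l ≤ B μ μ)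
    (p : V →ₗ[ℚ] V) (hp1 : ∀ v, p v ∈ N₁)
    (hp2 : ∀ v, ∀ w ∈ N₁, B (v - p v) w = 0) :
    l ∈ qCone (⇑p '' {a : V | a ∈ Ξ ∧ B l a = 1}) := by

  classical
  -- replace hp2 by "B agrees with projection against N₁"
  have hproj : ∀ v, ∀ x ∈ N₁, B (p v) x = B v x := by
    intro v x hx
    have := hp2 v x hx
    simp only [map_sub, LinearMap.sub_apply] at this
    linarith
  set A : Finset V := Ξ.filter (fun a => B l a = 1) with hA
  set S : Finset V := A.image p with hS
  have hset : (⇑p '' {a : V | a ∈ Ξ ∧ B l a = 1}) = (↑S : Set V) := by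
    rw [hS, Finset.coe_image, hA, Finset.coe_filter]
  rw [hset]
  by_contra hcon
  obtain ⟨w, hwS, hwl⟩ := qFarkas B hpos S.card S l le_rfl hcon
  set u : V := p w with hu
  have hul : B u l = B w l := hproj w l hlN
  have hulpos : 0 < B u l := hul ▸ hwl
  have hune : u ≠ 0 := by
    intro h
    rw [h] at hulpos
    simp at hulpos
  have hBuu : 0 < B u u := hpos u hune
  -- key: B u a = B w (p a)
  have hkey : ∀ a : V, B u a = B w (p a) := by
    intro a
    have h1 : B u a = B a u := hsymm u a
    have h2 : B a u = B (p a) u := (hproj a u (hp1 w)).symm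
    have h3 : B (p a) u = B u (p a) := hsymm (p a) u
    have h4 : B u (p a) = B w (p a) := hproj w (p a) (hp1 a)
    rw [h1, h2, h3, h4]
  have hactive : ∀ a ∈ A, B u a ≤ 0 := by
    intro a haA
    rw [hkey a]
    exact hwS (p a) (Finset.mem_image_of_mem p haA)
  -- choose ε
  set ε₀ : ℚ := B u l / B u u with hε₀
  have hε₀pos : 0 < ε₀ := div_pos hulpos hBuu
  set g : V → ℚ := fun a => if 0 < B u a ∧ 1 < B l a then (B l a - 1) / (B u a) else ε₀
    with hg
  set T : Finset ℚ := insert ε₀ (Ξ.image g) with hT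
  have hTne : T.Nonempty := ⟨ε₀, Finset.mem_insert_self _ _⟩
  set ε : ℚ := T.min' hTne with hε
  have hεpos : 0 < ε := by
    have hm := T.min'_mem hTne
    rw [← hε] at hm
    rw [hT, Finset.mem_insert] at hm
    rcases hm with h | h
    · rw [h]; exact hε₀pos
    · obtain ⟨a, _, hga⟩ := Finset.mem_image.mp h
      rw [← hga, hg]
      by_cases hc : 0 < B u a ∧ 1 < B l a
      · simp only [hc, if_true]
        exact div_pos (by linarith [hc.2]) hc.1
      · simp only [hc, if_false]
        exact hε₀pos
  have hεε₀ : ε ≤ ε₀ := Finset.min'_le _ _ (Finset.mem_insert_self _ _)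
  have hεg : ∀ a ∈ Ξ, ε ≤ g a := fun a ha =>
    Finset.min'_le _ _ (Finset.mem_insert_of_mem (Finset.mem_image_of_mem g ha))
  set μ : V := l - ε • u with hμ
  have hμN : μ ∈ N₁ := by
    rw [hN₁]
    intro x hx
    have h1 : B l x = 0 := by rw [hN₁] at hlN; exact hlN x hx
    have h2 : B u x = 0 := by
      have := hp1 w
      rw [hN₁] at this
      exact this x hx
    rw [hμ]
    simp only [map_sub, map_smul, LinearMap.sub_apply, LinearMap.smul_apply, smul_eq_mul,
      h1, h2]
    ring
  have hμfeas : ∀ a ∈ Ξ, a ∉ F₀ → 1 ≤ B μ a := by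
    intro a ha haF
    have hBμa : B μ a = B l a - ε * B u a := by
      rw [hμ]; simp [map_sub, map_smul, smul_eq_mul]
    rw [hBμa]
    by_cases hc : 0 < B u a
    · have haA : a ∉ A := by
        intro haA
        linarith [hactive a haA]
      have hne : B l a ≠ 1 := by
        intro h
        exact haA (Finset.mem_filter.mpr ⟨ha, h⟩)
      have hlt : 1 < B l a := lt_of_le_of_ne (hfeas a ha haF) (Ne.symm hne)
      have hga : g a = (B l a - 1) / (B u a) := by
        rw [hg]; simp only [hc, hlt, and_true, if_true]
      have := hεg a ha
      rw [hga] at this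
      have h2 : ε * B u a ≤ B l a - 1 := by
        rw [← le_div_iff₀ hc]
        exact this
      linarith
    · push_neg at hc
      have h1 : 1 ≤ B l a := hfeas a ha haF
      nlinarith
  have hle := hmin μ hμN hμfeas
  have hBμμ : B μ μ = B l l - 2 * ε * B u l + ε * ε * B u u := by
    rw [hμ]
    simp only [map_sub, map_smul, LinearMap.sub_apply, LinearMap.smul_apply, smul_eq_mul]
    rw [hsymm l u]
    ring
  rw [hBμμ] at hle
  have hεBuu : ε * B u u ≤ B u l := by
    rw [hε₀] at hεε₀
    rw [← le_div_iff₀ hBuu]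
    exact hεε₀
  nlinarith
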